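/- For j, n, m ≥ 3, the size Ramsey multipartite number satisfies m_j(S_n, S_m) ≤ ⌈(n+m-3)/(j-1)⌉. -/

import Mathlib

/-- The complete balanced multipartite graph `K_{j×s}` on `Fin j × Fin s`:
vertices are adjacent iff they lie in different parts (different first coordinate). -/
def multiK (j s : ℕ) : SimpleGraph (Fin j × Fin s) where
  Adj u v := u.1 ≠ v.1
  symm := ⟨by intro _ _ h; exact h.symm⟩
  loopless := ⟨by intro _ h; exact h rfl⟩

/-- Degree of a vertex, via `Set.ncard` of its neighbor set. -/
noncomputable def mdeg {V : Type*} (G : SimpleGraph V) (v : V) : ℕ :=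
  (G.neighborSet v).ncard

/-- `K_{j×s} → (S_n, S_m)`: every red/blue edge coloring (red subgraph `R ≤ K_{j×s}`,
blue the rest) contains a red `K_{1,n-1}` or a blue `K_{1,m-1}`. -/
def Arrows (j s n m : ℕ) : Prop :=
  ∀ R : SimpleGraph (Fin j × Fin s), R ≤ multiK j s →
    (∃ v, n - 1 ≤ mdeg R v) ∨ (∃ v, m - 1 ≤ mdeg (multiK j s \ R) v)

/-- The size Ramsey multipartite number `m_j(S_n, S_m)`. -/
noncomputable def mj (j n m : ℕ) : ℕ := sInf {s | Arrows j s n m}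

lemma mdeg_multiK (j s : ℕ) (v : Fin j × Fin s) :
    mdeg (multiK j s) v = (j - 1) * s := by
  have : (multiK j s).neighborSet v = ({v.1}ᶜ : Set (Fin j)) ×ˢ (Set.univ : Set (Fin s)) := by
    ext u; simp [multiK, SimpleGraph.neighborSet, ne_comm, eq_comm]
  rw [mdeg, this, Set.ncard_eq_toFinset_card', Set.toFinset_prod]
  simp [Set.ncard_eq_toFinset_card', Finset.card_compl]

lemma mdeg_add (j s : ℕ) (R : SimpleGraph (Fin j × Fin s)) (h : R ≤ multiK j s)
    (v : Fin j × Fin s) :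
    mdeg R v + mdeg (multiK j s \ R) v = (j - 1) * s := by
  rw [← mdeg_multiK j s v]
  have hset : (multiK j s).neighborSet v =
      R.neighborSet v ∪ (multiK j s \ R).neighborSet v := by
    ext u
    simp only [SimpleGraph.mem_neighborSet, Set.mem_union, SimpleGraph.sdiff_adj]
    constructor
    · intro hK; by_cases hR : R.Adj v u
      · exact Or.inl hR
      · exact Or.inr ⟨hK, hR⟩
    · rintro (hR | ⟨hK, _⟩)
      · exact h hR
      · exact hK
  have hdisj : Disjoint (R.neighborSet v) ((multiK j s \ R).neighborSet v) := by
    rw [Set.disjoint_left]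
    intro u hu hu'
    exact hu'.2 hu
  rw [mdeg, mdeg, mdeg, hset, Set.ncard_union_eq hdisj (Set.toFinite _) (Set.toFinite _)]

theorem stmt10 (j n m : ℕ) (hj : 3 ≤ j) (hn : 3 ≤ n) (hm : 3 ≤ m) :
    mj j n m ≤ (n + m - 3) ⌈/⌉ (j - 1) := by
  set s := (n + m - 3) ⌈/⌉ (j - 1) with hs
  apply Nat.sInf_le
  have hjpos : 0 < j - 1 := by omega
  have hkey : n + m - 3 ≤ (j - 1) * s := le_smul_ceilDiv hjpos
  have hspos : 0 < s := by
    rcases Nat.eq_zero_or_pos s with h0 | h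
    · rw [h0, Nat.mul_zero] at hkey; omega
    · exact h
  intro R hR
  have v : Fin j × Fin s := ⟨⟨0, by omega⟩, ⟨0, hspos⟩⟩
  have hsum := mdeg_add j s R hR v
  by_cases hred : n - 1 ≤ mdeg R v
  · exact Or.inl ⟨v, hred⟩
  · exact Or.inr ⟨v, by omega⟩
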